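/- arXiv:1304.1990 — 4 statements merged into one kernel-verified Lean document; each statement's English description precedes it below -/
import Mathlib

section
/- For every integer k with 2 ≤ k ≤ d−1 there is a constant c > 0 depending only on d such that if the characteristic of F_q exceeds c, then the set H̄_k contains d linearly independent vectors of F̄_q^d (it spans F̄_q^d); in particular, H̄_k is not contained in any hyperplane of affine d-space over F̄_q. -/
open MvPolynomial

noncomputable section

/-- The homogeneous polynomial `h_{j+1}(x) = x_1^{j+2} + ⋯ + x_k^{j+2} − x_{k+j+1}^{j+2}`
(in 0-based indexing, `j : Fin (d-k)` corresponds to the defining equation `h_{j+1}`). -/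
def hpoly (K : Type) [CommRing K] (d k : ℕ) (j : Fin (d - k)) : MvPolynomial (Fin d) K :=
  (∑ i : Fin d, if (i : ℕ) < k then X i ^ ((j : ℕ) + 2) else 0)
    - X (⟨k + (j : ℕ), by have h := j.isLt; omega⟩ : Fin d) ^ ((j : ℕ) + 2)

/-- The homogeneous variety `H̄_k` as a set of points with coordinates in `K`. -/
def Hset (K : Type) [CommRing K] (d k : ℕ) : Set (Fin d → K) :=
  {x | ∀ j : Fin (d - k), eval x (hpoly K d k j) = 0}

open scoped Classical in
/-- The set of `F_q`-points of the homogeneous variety `H_k`, as a finite set. -/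
def Hfin (F : Type) [Field F] [Fintype F] (d k : ℕ) : Finset (Fin d → F) :=
  Finset.univ.filter fun x => ∀ j : Fin (d - k), eval x (hpoly F d k j) = 0

open scoped ENNReal in
/-- `L^p` norm with respect to the normalized counting measure on `F_q^d`. -/
def lpNorm {F : Type} [Fintype F] {d : ℕ} (p : ℝ≥0∞) (f : (Fin d → F) → ℂ) : ℝ :=
  if p = ⊤ then ⨆ x, ‖f x‖
  else (((Fintype.card F : ℝ) ^ d)⁻¹ * ∑ x, ‖f x‖ ^ p.toReal) ^ (1 / p.toReal)

/-- Convolution `f ∗ dσ` with the normalized surface measure on `V`. -/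
def convMeas {F : Type} [Field F] [Fintype F] {d : ℕ} (V : Finset (Fin d → F))
    (f : (Fin d → F) → ℂ) : (Fin d → F) → ℂ :=
  fun y => (V.card : ℂ)⁻¹ * ∑ x ∈ V, f (y - x)

end

section HbarProof

open Finset
open scoped Classical

variable {K : Type} [Field K]

/-- Auxiliary: evaluation of `hpoly` at a point. -/
lemma eval_hpoly {d k : ℕ} (x : Fin d → K) (j : Fin (d - k)) :
    eval x (hpoly K d k j) =
      (∑ i : Fin d, if (i : ℕ) < k then x i ^ ((j : ℕ) + 2) else 0)
        - x (⟨k + (j : ℕ), by have h := j.isLt; omega⟩ : Fin d) ^ ((j : ℕ) + 2) := by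
  simp [hpoly, apply_ite (eval x)]

/-- The `i`-th vector of our spanning family. -/
noncomputable def Vrow {d : ℕ} (k : ℕ) (zf : ℕ → K) (i t : Fin d) : K :=
  if (i : ℕ) < k then (if t = i ∨ k ≤ (t : ℕ) then 1 else 0)
  else if (t : ℕ) = 0 then 1 else if (t : ℕ) < k then 0
    else if t = i then zf ((i : ℕ) - k) else 1

lemma Vrow_head {d k : ℕ} {zf : ℕ → K} {i t : Fin d} (hik : (i : ℕ) < k) :
    Vrow k zf i t = if t = i ∨ k ≤ (t : ℕ) then 1 else 0 := by
  simp only [Vrow]; rw [if_pos hik]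

lemma Vrow_tail {d k : ℕ} {zf : ℕ → K} {i t : Fin d} (hik : ¬ (i : ℕ) < k) :
    Vrow k zf i t = if (t : ℕ) = 0 then 1 else if (t : ℕ) < k then 0
      else if t = i then zf ((i : ℕ) - k) else 1 := by
  simp only [Vrow]; rw [if_neg hik]

lemma Vrow_mem_Hset {d k : ℕ} (hk2 : 2 ≤ k) (hkd : k < d) (zf : ℕ → K)
    (hzf : ∀ n : ℕ, n + 2 ≤ d → zf n ^ (n + 2) = 1) (i : Fin d) :
    Vrow k zf i ∈ Hset K d k := by
  haveI : NeZero d := ⟨by omega⟩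
  have h0v : ((0 : Fin d) : ℕ) = 0 := Fin.val_zero d
  intro j
  rw [eval_hpoly]
  have hj := j.isLt
  set w : Fin d := (⟨k + (j : ℕ), by omega⟩ : Fin d) with hw
  have hw0 : (w : ℕ) = k + (j : ℕ) := rfl
  by_cases hik : (i : ℕ) < k
  · -- head rows
    have hsum : (∑ t : Fin d, if (t : ℕ) < k then Vrow k zf i t ^ ((j : ℕ) + 2) else 0) = 1 := by
      rw [Finset.sum_eq_single i]
      · rw [if_pos hik, Vrow_head hik, if_pos (Or.inl rfl), one_pow]
      · intro t _ hti
        by_cases htk : (t : ℕ) < k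
        · have hcond : ¬ (t = i ∨ k ≤ (t : ℕ)) := by
            push_neg; exact ⟨hti, by omega⟩
          rw [if_pos htk, Vrow_head hik, if_neg hcond]
          exact zero_pow (by omega)
        · exact if_neg htk
      · intro h; exact absurd (Finset.mem_univ i) h
    have htail : Vrow k zf i w = 1 := by
      rw [Vrow_head hik]
      exact if_pos (Or.inr (by omega))
    rw [hsum, htail, one_pow, sub_self]
  · -- tail rows
    have hsum : (∑ t : Fin d, if (t : ℕ) < k then Vrow k zf i t ^ ((j : ℕ) + 2) else 0) = 1 := by
      rw [Finset.sum_eq_single (0 : Fin d)]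
      · rw [if_pos (by omega : ((0 : Fin d) : ℕ) < k), Vrow_tail hik, if_pos h0v, one_pow]
      · intro t _ ht0
        by_cases htk : (t : ℕ) < k
        · have htv : ¬ (t : ℕ) = 0 := fun h => ht0 (Fin.ext (by simpa using h))
          rw [if_pos htk, Vrow_tail hik, if_neg htv, if_pos htk]
          exact zero_pow (by omega)
        · exact if_neg htk
      · intro h; exact absurd (Finset.mem_univ (0 : Fin d)) h
    have htail : Vrow k zf i w ^ ((j : ℕ) + 2) = 1 := by
      have hwv0 : ¬ (w : ℕ) = 0 := by omega
      have hwvk : ¬ (w : ℕ) < k := by omega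
      rw [Vrow_tail hik, if_neg hwv0, if_neg hwvk]
      by_cases hwi : w = i
      · have hik' : (i : ℕ) = k + (j : ℕ) := by rw [← hwi]
        have hsub : (i : ℕ) - k = (j : ℕ) := by omega
        rw [if_pos hwi, hsub]
        exact hzf (j : ℕ) (by omega)
      · rw [if_neg hwi, one_pow]
    rw [hsum, htail, sub_self]

lemma Vrow_span_top {d k : ℕ} (hk2 : 2 ≤ k) (hkd : k < d) (zf : ℕ → K)
    (hzf : ∀ n : ℕ, n + 2 ≤ d → zf n ≠ 1) :
    Submodule.span K (Set.range (Vrow (d := d) k zf)) = ⊤ := by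
  haveI : NeZero d := ⟨by omega⟩
  set S := Submodule.span K (Set.range (Vrow (d := d) k zf)) with hS
  have hvS : ∀ i, Vrow (d := d) k zf i ∈ S := fun i => Submodule.subset_span ⟨i, rfl⟩
  have h0v : ((0 : Fin d) : ℕ) = 0 := Fin.val_zero d
  have h0lt : ((0 : Fin d) : ℕ) < k := by omega
  -- tail singles
  have htail : ∀ i : Fin d, k ≤ (i : ℕ) → Pi.single i (1 : K) ∈ S := by
    intro i hik
    have hik' : ¬ (i : ℕ) < k := by omega
    have hzne : zf ((i : ℕ) - k) - 1 ≠ 0 := by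
      have h1 := hzf ((i : ℕ) - k) (by have := i.isLt; omega)
      intro h; exact h1 (sub_eq_zero.mp h)
    have key : Vrow (d := d) k zf i - Vrow (d := d) k zf 0
        = (zf ((i : ℕ) - k) - 1) • (Pi.single i (1 : K) : Fin d → K) := by
      funext t
      simp only [Pi.sub_apply, Pi.smul_apply, Pi.single_apply, smul_eq_mul]
      by_cases hti : t = i
      · subst hti
        have h1 : ¬ ((t : ℕ) < k) := by omega
        have h2 : ¬ (t : ℕ) = 0 := by omega
        rw [Vrow_tail hik', if_neg h2, if_neg h1, if_pos rfl, Vrow_head h0lt,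
          if_pos (Or.inr hik), if_pos rfl, mul_one]
      · rw [if_neg hti, mul_zero]
        by_cases ht0 : (t : ℕ) = 0
        · have hc : t = (0 : Fin d) ∨ k ≤ (t : ℕ) := Or.inl (Fin.ext (by simpa using ht0))
          rw [Vrow_tail hik', if_pos ht0, Vrow_head h0lt, if_pos hc, sub_self]
        · by_cases htk : (t : ℕ) < k
          · have hc : ¬ (t = (0 : Fin d) ∨ k ≤ (t : ℕ)) := by
              push_neg
              exact ⟨fun h => ht0 (by rw [h]; exact h0v), by omega⟩
            rw [Vrow_tail hik', if_neg ht0, if_pos htk, Vrow_head h0lt, if_neg hc, sub_self]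
          · have hc : t = (0 : Fin d) ∨ k ≤ (t : ℕ) := Or.inr (by omega)
            rw [Vrow_tail hik', if_neg ht0, if_neg htk, if_neg hti, Vrow_head h0lt,
              if_pos hc, sub_self]
    have hexp : Pi.single i (1 : K) = (zf ((i : ℕ) - k) - 1)⁻¹ •
        (Vrow (d := d) k zf i - Vrow (d := d) k zf 0) := by
      rw [key, smul_smul, inv_mul_cancel₀ hzne, one_smul]
    rw [hexp]
    exact Submodule.smul_mem S _ (Submodule.sub_mem S (hvS i) (hvS 0))
  -- the first single
  have h0 : Pi.single (0 : Fin d) (1 : K) ∈ S := by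
    have key : Pi.single (0 : Fin d) (1 : K) = Vrow (d := d) k zf 0
        - ∑ i ∈ Finset.univ.filter (fun i : Fin d => k ≤ (i : ℕ)), Pi.single i (1 : K) := by
      funext t
      rw [Pi.sub_apply, Finset.sum_apply]
      have hsum : (∑ i ∈ Finset.univ.filter (fun i : Fin d => k ≤ (i : ℕ)),
          Pi.single i (1 : K) t) = if k ≤ (t : ℕ) then 1 else 0 := by
        rw [Finset.sum_congr rfl (fun i _ => Pi.single_apply i (1 : K) t),
          Finset.sum_ite_eq _ t (fun _ => (1 : K))]
        simp [Finset.mem_filter]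
      rw [hsum, Pi.single_apply]
      by_cases ht0 : t = (0 : Fin d)
      · subst ht0
        rw [if_pos rfl, if_neg (by omega : ¬ k ≤ ((0 : Fin d) : ℕ)), Vrow_head h0lt,
          if_pos (Or.inl rfl), sub_zero]
      · rw [if_neg ht0]
        by_cases htk : k ≤ (t : ℕ)
        · rw [if_pos htk, Vrow_head h0lt, if_pos (Or.inr htk), sub_self]
        · rw [if_neg htk]
          have hc : ¬ (t = (0 : Fin d) ∨ k ≤ (t : ℕ)) := by push_neg; exact ⟨ht0, by omega⟩
          rw [Vrow_head h0lt, if_neg hc, sub_zero]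
    rw [key]
    exact Submodule.sub_mem S (hvS 0)
      (Submodule.sum_mem S (fun i hi => htail i (Finset.mem_filter.mp hi).2))
  -- head singles
  have hhead : ∀ m : Fin d, (m : ℕ) < k → Pi.single m (1 : K) ∈ S := by
    intro m hmk
    by_cases hm0 : m = (0 : Fin d)
    · subst hm0; exact h0
    · have hm0' : ¬ (m : ℕ) = 0 := fun h => hm0 (Fin.ext (by simpa using h))
      have key : Pi.single m (1 : K) = (Vrow (d := d) k zf m - Vrow (d := d) k zf 0)
          + Pi.single (0 : Fin d) (1 : K) := by
        funext t
        rw [Pi.add_apply, Pi.sub_apply, Pi.single_apply, Pi.single_apply]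
        by_cases htm : t = m
        · subst htm
          have h1 : ¬ (t = (0 : Fin d) ∨ k ≤ (t : ℕ)) := by
            push_neg; exact ⟨hm0, by omega⟩
          rw [if_pos rfl, if_neg hm0, Vrow_head hmk, if_pos (Or.inl rfl), Vrow_head h0lt,
            if_neg h1, sub_zero, add_zero]
        · rw [if_neg htm]
          by_cases ht0 : t = (0 : Fin d)
          · subst ht0
            have h1 : ¬ ((0 : Fin d) = m ∨ k ≤ ((0 : Fin d) : ℕ)) := by
              push_neg; exact ⟨fun h => hm0 h.symm, by omega⟩
            rw [if_pos rfl, Vrow_head hmk, if_neg h1, Vrow_head h0lt, if_pos (Or.inl rfl)]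
            ring
          · rw [if_neg ht0]
            by_cases htk : k ≤ (t : ℕ)
            · rw [Vrow_head hmk, if_pos (Or.inr htk), Vrow_head h0lt, if_pos (Or.inr htk)]
              ring
            · have h1 : ¬ (t = m ∨ k ≤ (t : ℕ)) := by push_neg; exact ⟨htm, by omega⟩
              have h2 : ¬ (t = (0 : Fin d) ∨ k ≤ (t : ℕ)) := by
                push_neg; exact ⟨ht0, by omega⟩
              rw [Vrow_head hmk, if_neg h1, Vrow_head h0lt, if_neg h2]
              ring
      rw [key]
      exact Submodule.add_mem S (Submodule.sub_mem S (hvS m) (hvS 0)) h0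
  have hall : ∀ t : Fin d, Pi.single t (1 : K) ∈ S := by
    intro t
    by_cases h : (t : ℕ) < k
    · exact hhead t h
    · exact htail t (by omega)
  rw [eq_top_iff, ← (Pi.basisFun K (Fin d)).span_eq]
  apply Submodule.span_le.mpr
  rintro x ⟨i, rfl⟩
  rw [Pi.basisFun_apply]
  exact hall i

end HbarProof

/-- For every `2 ≤ k ≤ d−1`, if the characteristic is large enough
(depending only on `d`), then `H̄_k` contains `d` linearly independent vectors of
`F̄_q^d`, and it spans `F̄_q^d`. -/
theorem Hbar_spans (d : ℕ) (hd : 3 ≤ d) :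
    ∃ c : ℕ, 0 < c ∧ ∀ k : ℕ, 2 ≤ k → k ≤ d - 1 →
      ∀ (F : Type) [Field F] [Fintype F], c < ringChar F →
        ∃ v : Fin d → (Fin d → AlgebraicClosure F),
          (∀ i, v i ∈ Hset (AlgebraicClosure F) d k) ∧
          LinearIndependent (AlgebraicClosure F) v ∧
          Submodule.span (AlgebraicClosure F) (Hset (AlgebraicClosure F) d k) = ⊤ := by
  classical
  refine ⟨d, by omega, ?_⟩
  intro k hk2 hk1 F _ _ hc
  set K := AlgebraicClosure F with hKdef
  haveI hcharF : CharP F (ringChar F) := ringChar.charP F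
  haveI hcharK : CharP K (ringChar F) :=
    charP_of_injective_algebraMap (algebraMap F K).injective _
  have hne : ∀ n : ℕ, 0 < n → n ≤ d → (n : K) ≠ 0 := by
    intro n hn0 hnd h
    have h1 := (CharP.cast_eq_zero_iff K (ringChar F) n).mp h
    have h2 := Nat.le_of_dvd hn0 h1
    omega
  have hroot : ∀ n : ℕ, ∃ w : K, n + 2 ≤ d → (w ^ (n + 2) = 1 ∧ w ≠ 1) := by
    intro n
    by_cases h : n + 2 ≤ d
    · haveI : NeZero (((n + 2 : ℕ)) : K) := ⟨hne (n + 2) (by omega) h⟩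
      obtain ⟨ζ, hζ⟩ := HasEnoughRootsOfUnity.exists_primitiveRoot K (n + 2)
      exact ⟨ζ, fun _ => ⟨hζ.pow_eq_one, hζ.ne_one (by omega)⟩⟩
    · exact ⟨1, fun h' => absurd h' h⟩
  choose zf hzf using hroot
  refine ⟨Vrow k zf, ?_, ?_, ?_⟩
  · exact Vrow_mem_Hset hk2 (by omega) zf (fun n hn => (hzf n hn).1)
  · apply linearIndependent_of_top_le_span_of_card_eq_finrank
    · rw [Vrow_span_top hk2 (by omega) zf (fun n hn => (hzf n hn).2)]
    · simp [Module.finrank_fintype_fun_eq_card]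
  · apply le_antisymm le_top
    rw [← Vrow_span_top (K := K) hk2 (by omega) zf (fun n hn => (hzf n hn).2)]
    apply Submodule.span_mono
    rintro x ⟨i, rfl⟩
    exact Vrow_mem_Hset hk2 (by omega) zf (fun n hn => (hzf n hn).1) i
end

section
/- Let 2 ≤ k ≤ d−1 and for each j let H̄_k^j = {x ∈ F̄_q^d : h_j(x) = 0}. There is a constant c > 0 depending only on d such that if the characteristic of F_q exceeds c, then for every n ∈ {1, 2, …, d−k−1}: (a) the intersection (∩_{j=1}^{n} H̄_k^j) ∩ H̄_k^{n+1} is nonempty, and (b) there exists a point α ∈ ∩_{j=1}^{n} H̄_k^j with α ∉ H̄_k^{n+1}, i.e. h_j(α) = 0 for j = 1, …, n but h_{n+1}(α) ≠ 0. -/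
open MvPolynomial

/-- For `2 ≤ k ≤ d−1` and `1 ≤ n ≤ d−k−1`, if the characteristic is
large enough (depending only on `d`): (a) the common zero set of `h_1, …, h_{n+1}` over
`F̄_q` is nonempty, and (b) there is a point `α` with `h_j(α) = 0` for `j = 1, …, n`
but `h_{n+1}(α) ≠ 0`. (In 0-based indexing, `h_{j+1}` is `hpoly _ d k j`.) -/
theorem Hbar_intersection_proper (d : ℕ) (hd : 3 ≤ d) :
    ∃ c : ℕ, 0 < c ∧ ∀ k : ℕ, 2 ≤ k → k ≤ d - 1 →
      ∀ (F : Type) [Field F] [Fintype F], c < ringChar F →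
        ∀ (n : ℕ) (hn1 : 1 ≤ n) (hn2 : n ≤ d - k - 1),
          (∃ x : Fin d → AlgebraicClosure F, ∀ j : Fin (d - k), (j : ℕ) < n + 1 →
            eval x (hpoly (AlgebraicClosure F) d k j) = 0) ∧
          (∃ α : Fin d → AlgebraicClosure F,
            (∀ j : Fin (d - k), (j : ℕ) < n →
              eval α (hpoly (AlgebraicClosure F) d k j) = 0) ∧
            eval α (hpoly (AlgebraicClosure F) d k ⟨n, by have h1 := hn1; have h2 := hn2; omega⟩) ≠ 0) := by
  refine ⟨1, one_pos, fun k hk2 hk1 F _ _ hc n hn1 hn2 => ?_⟩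
  set K := AlgebraicClosure F
  have hkd : k + n < d := by omega
  set α : Fin d → K := fun i =>
    if (i : ℕ) = 0 ∨ (k ≤ (i : ℕ) ∧ (i : ℕ) < k + n) then 1 else 0 with hα
  have key : ∀ j : Fin (d - k), eval α (hpoly K d k j)
      = 1 - α ⟨k + (j : ℕ), by have := j.isLt; omega⟩ ^ ((j : ℕ) + 2) := by
    intro j
    have hsum : (∑ i : Fin d, if (i : ℕ) < k then α i ^ ((j : ℕ) + 2) else 0) = 1 := by
      rw [Finset.sum_eq_single (⟨0, by omega⟩ : Fin d)]
      · simp [hα]; omega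
      · intro i _ hi
        rcases lt_or_ge (i : ℕ) k with h | h
        · have hi0 : (i : ℕ) ≠ 0 := fun h0 => hi (Fin.ext h0)
          have hz : α i = 0 := by
            rw [hα]; simp only; rw [if_neg]; push_neg; exact ⟨hi0, fun hk => absurd hk (by omega)⟩
          simp [h, hz]
        · simp [not_lt.2 h]
      · simp
    simp only [hpoly, map_sub, map_sum, apply_ite (eval α), map_pow, eval_X, map_zero, hsum]
  constructor
  · refine ⟨0, fun j _ => ?_⟩
    simp [hpoly, apply_ite constantCoeff]
  · refine ⟨α, fun j hj => ?_, ?_⟩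
    · rw [key j]
      have h1 : α ⟨k + (j : ℕ), by have := j.isLt; omega⟩ = 1 := by
        rw [hα]; simp only; rw [if_pos]; right; exact ⟨by omega, by omega⟩
      rw [h1]; simp
    · rw [key]
      have h0 : α ⟨k + n, by omega⟩ = 0 := by
        rw [hα]; simp only; rw [if_neg]; push_neg; exact ⟨by omega, fun _ => by omega⟩
      rw [h0]
      simp
end

section
/- Let k ≥ 2 and d−k ≥ 4. There is a constant c > 0 depending only on d such that if the characteristic of F_q exceeds c, then there exists a point x ∈ H̄_k with x ≠ 0 at which the (d−k)×d Jacobian matrix (∂h_j/∂x_i)(x) has rank strictly less than d−k; that is, H̄_k has a singular point away from the origin. -/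
open MvPolynomial

/-- The `(d−k) × d` Jacobian matrix `(∂h_j/∂x_i)(x)` of the system defining `H̄_k`. -/
noncomputable def jacH (K : Type) [CommRing K] (d k : ℕ) (x : Fin d → K) :
    Matrix (Fin (d - k)) (Fin d) K :=
  Matrix.of fun j i => eval x (pderiv i (hpoly K d k j))

/-- For `k ≥ 2` and `d−k ≥ 4`, if the characteristic is large enough
(depending only on `d`), then there is a nonzero point of `H̄_k` at which the Jacobian
matrix has rank strictly less than `d−k`; i.e. `H̄_k` has a singular point away from
the origin. -/
theorem Hbar_singular_point (d k : ℕ) (hk : 2 ≤ k) (hdk : 4 ≤ d - k) :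
    ∃ c : ℕ, 0 < c ∧ ∀ (F : Type) [Field F] [Fintype F], c < ringChar F →
      ∃ x ∈ Hset (AlgebraicClosure F) d k, x ≠ 0 ∧
        (jacH (AlgebraicClosure F) d k x).rank < d - k := by
  have hd6 : 6 ≤ d := by omega
  refine ⟨d, by omega, ?_⟩
  intro F _ _ hchar
  set K := AlgebraicClosure F with hKdef
  have hp : CharP K (ringChar F) :=
    charP_of_injective_algebraMap (algebraMap F K).injective (ringChar F)
  have h5 : (5 : K) ≠ 0 := by
    intro h
    have h' : ((5 : ℕ) : K) = 0 := by exact_mod_cast h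
    have hdvd := (CharP.cast_eq_zero_iff K (ringChar F) 5).mp h'
    have := Nat.le_of_dvd (by norm_num) hdvd
    omega
  -- choose roots
  have hroots : ∀ j : Fin (d - k), ∃ z : K, z ^ ((j : ℕ) + 2) = 1 + (-1 : K) ^ (j : ℕ) :=
    fun j => IsAlgClosed.exists_pow_nat_eq _ (by omega)
  choose r hr using hroots
  -- the point
  set x : Fin d → K := fun i =>
    if (i : ℕ) = 0 then 1
    else if (i : ℕ) = 1 then -1
    else if h : k ≤ (i : ℕ) then r ⟨(i : ℕ) - k, by have := i.isLt; omega⟩ else 0 with hxdef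
  have hx0 : ∀ i : Fin d, (i : ℕ) = 0 → x i = 1 := by intro i h; simp [hxdef, h]
  have hx1 : ∀ i : Fin d, (i : ℕ) = 1 → x i = -1 := by intro i h; simp [hxdef, h]
  have hxmid : ∀ i : Fin d, 2 ≤ (i : ℕ) → (i : ℕ) < k → x i = 0 := by
    intro i h1 h2
    simp only [hxdef]
    rw [if_neg (by omega), if_neg (by omega), dif_neg (by omega)]
  have hxr : ∀ i : Fin d, k ≤ (i : ℕ) → ∀ j : Fin (d - k), (j : ℕ) = (i : ℕ) - k →
      x i = r j := by
    intro i h j hj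
    simp only [hxdef]
    rw [if_neg (show ¬(i : ℕ) = 0 by omega), if_neg (show ¬(i : ℕ) = 1 by omega),
      dif_pos h]
    exact congrArg r (Fin.ext (by simpa using hj)).symm
  have hxm : ∀ j : Fin (d - k),
      x (⟨k + (j : ℕ), by have := j.isLt; omega⟩ : Fin d) = r j := by
    intro j
    exact hxr ⟨k + (j : ℕ), by have := j.isLt; omega⟩ (Nat.le_add_right k (j : ℕ)) j (by simp)
  -- the sum of powers over the first k coordinates
  have hsum : ∀ e : ℕ, 0 < e →
      (∑ i : Fin d, if (i : ℕ) < k then x i ^ e else 0) = 1 + (-1 : K) ^ e := by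
    intro e he
    have i0lt : 0 < d := by omega
    have i1lt : 1 < d := by omega
    calc (∑ i : Fin d, if (i : ℕ) < k then x i ^ e else 0)
        = ∑ i : Fin d, ((if i = (⟨0, i0lt⟩ : Fin d) then (1 : K) else 0)
            + (if i = (⟨1, i1lt⟩ : Fin d) then (-1 : K) ^ e else 0)) := by
          apply Finset.sum_congr rfl
          intro i _
          by_cases h0 : (i : ℕ) = 0
          · have hi : i = (⟨0, i0lt⟩ : Fin d) := by
              apply Fin.ext; simpa using h0
            subst hi
            rw [hx0 _ rfl]
            simp [Fin.ext_iff, show 0 < k by omega]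
          · by_cases h1 : (i : ℕ) = 1
            · have hi : i = (⟨1, i1lt⟩ : Fin d) := by
                apply Fin.ext; simpa using h1
              subst hi
              rw [hx1 _ rfl]
              simp [Fin.ext_iff, show 1 < k by omega]
            · by_cases h2 : (i : ℕ) < k
              · rw [hxmid i (by omega) h2]
                simp [Fin.ext_iff, h0, h1, h2, zero_pow he.ne']
              · simp [Fin.ext_iff, h0, h1, h2]
    _ = 1 + (-1 : K) ^ e := by
          rw [Finset.sum_add_distrib, Finset.sum_ite_eq' Finset.univ,
            Finset.sum_ite_eq' Finset.univ]
          simp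
  -- eval formula
  have heval : ∀ j : Fin (d - k), eval x (hpoly K d k j) =
      (∑ i : Fin d, if (i : ℕ) < k then x i ^ ((j : ℕ) + 2) else 0)
        - x (⟨k + (j : ℕ), by have := j.isLt; omega⟩ : Fin d) ^ ((j : ℕ) + 2) := by
    intro j
    simp only [hpoly, map_sub, map_sum, map_pow, eval_X, apply_ite (eval x), map_zero]
  -- membership in Hset
  have hmem : x ∈ Hset K d k := by
    intro j
    rw [heval j, hsum _ (by omega), hxm j, hr j, pow_add]
    ring
  -- x is nonzero
  have hx_ne : x ≠ 0 := by
    intro h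
    have := congrFun h (⟨0, by omega⟩ : Fin d)
    rw [hx0 _ (by simp)] at this
    exact one_ne_zero this
  -- the two distinguished rows
  have h1lt : 1 < d - k := by omega
  have h3lt : 3 < d - k := by omega
  set j1 : Fin (d - k) := ⟨1, h1lt⟩ with hj1
  set j3 : Fin (d - k) := ⟨3, h3lt⟩ with hj3
  have hr1 : r j1 = 0 := by
    have h := hr j1
    rw [show ((j1 : ℕ) + 2) = 3 from rfl] at h
    simp only [hj1] at h
    norm_num at h
    exact h
  have hr3 : r j3 = 0 := by
    have h := hr j3
    rw [show ((j3 : ℕ) + 2) = 5 from rfl] at h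
    simp only [hj3] at h
    norm_num at h
    exact h
  -- Jacobian entries
  have hjac : ∀ (j : Fin (d - k)) (i : Fin d), jacH K d k x j i =
      (if (i : ℕ) < k then ((j : ℕ) + 2 : K) * x i ^ ((j : ℕ) + 1) else 0)
        - (if (⟨k + (j : ℕ), by have := j.isLt; omega⟩ : Fin d) = i
            then ((j : ℕ) + 2 : K) *
              x (⟨k + (j : ℕ), by have := j.isLt; omega⟩ : Fin d) ^ ((j : ℕ) + 1) else 0) := by
    intro j i
    simp only [jacH, Matrix.of_apply, hpoly, map_sub, map_sum, apply_ite (pderiv i),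
      pderiv_pow, pderiv_X, map_zero, map_sub, map_sum, map_pow, map_mul, eval_X,
      apply_ite (eval x), map_natCast, Pi.single_apply]
    congr 1
    · rw [Finset.sum_congr rfl (g := fun i' : Fin d =>
        if i' = i then (if (i' : ℕ) < k then ((j : ℕ) + 2 : K) * x i' ^ ((j : ℕ) + 1) else 0)
        else 0) ?_, Finset.sum_ite_eq' Finset.univ]
      · simp
      · intro i' _
        by_cases h : i' = i <;> by_cases h2 : (i' : ℕ) < k <;>
          simp [h, h2, Nat.add_sub_cancel, mul_comm, mul_assoc]
    · by_cases h : (⟨k + (j : ℕ), by have := j.isLt; omega⟩ : Fin d) = i <;>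
        simp [h, Nat.add_sub_cancel, mul_comm, mul_assoc]
  -- explicit rows
  have hrow1 : ∀ i : Fin d, jacH K d k x j1 i =
      if (i : ℕ) < k then 3 * x i ^ 2 else 0 := by
    intro i
    rw [hjac j1 i, hxm j1, hr1]
    have : ((j1 : ℕ) + 2 : K) = 3 := by norm_num [hj1]
    rw [this]
    norm_num [hj1]
  have hrow3 : ∀ i : Fin d, jacH K d k x j3 i =
      if (i : ℕ) < k then 5 * x i ^ 4 else 0 := by
    intro i
    rw [hjac j3 i, hxm j3, hr3]
    have : ((j3 : ℕ) + 2 : K) = 5 := by norm_num [hj3]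
    rw [this]
    norm_num [hj3]
  -- x i ^ 2 = x i ^ 4 on the first k coordinates
  have hsq : ∀ i : Fin d, (i : ℕ) < k → x i ^ 2 = x i ^ 4 := by
    intro i hik
    by_cases h0 : (i : ℕ) = 0
    · rw [hx0 i h0]; norm_num
    · by_cases h1 : (i : ℕ) = 1
      · rw [hx1 i h1]; norm_num
      · rw [hxmid i (by omega) hik]; norm_num
  set M := jacH K d k x with hM
  have hcol : ∀ i : Fin d, 5 * M j1 i = 3 * M j3 i := by
    intro i
    rw [hrow1 i, hrow3 i]
    by_cases h : (i : ℕ) < k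
    · rw [if_pos h, if_pos h, ← mul_assoc, ← mul_assoc]
      rw [show (5 : K) * 3 = 3 * 5 from by ring, mul_assoc, mul_assoc, hsq i h]
    · simp [h]
  -- the functional vanishing on the range
  refine ⟨x, hmem, hx_ne, ?_⟩
  have hrange : ∀ v : Fin d → K, 5 * (M.mulVec v) j1 - 3 * (M.mulVec v) j3 = 0 := by
    intro v
    simp only [Matrix.mulVec, dotProduct]
    rw [Finset.mul_sum, Finset.mul_sum, ← Finset.sum_sub_distrib]
    apply Finset.sum_eq_zero
    intro i _
    rw [← mul_assoc, ← mul_assoc, hcol i]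
    ring
  have hne : LinearMap.range M.mulVecLin ≠ ⊤ := by
    intro htop
    have h1 : Pi.single j1 (1 : K) ∈ LinearMap.range M.mulVecLin := by
      rw [htop]; trivial
    obtain ⟨v, hv⟩ := h1
    have hv1 : (M.mulVec v) j1 = 1 := by
      rw [show M.mulVec v = M.mulVecLin v from rfl, hv]; simp
    have hv3 : (M.mulVec v) j3 = 0 := by
      rw [show M.mulVec v = M.mulVecLin v from rfl, hv]
      exact Pi.single_eq_of_ne (by simp [hj1, hj3, Fin.ext_iff]) 1
    have := hrange v
    rw [hv1, hv3] at this
    simp at this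
    exact h5 this
  have hlt : LinearMap.range M.mulVecLin < ⊤ := lt_top_iff_ne_top.mpr hne
  have hfin := Submodule.finrank_lt (K := K) (V := Fin (d - k) → K) hlt.ne
  rw [Module.finrank_fin_fun] at hfin
  exact hfin
end

section
/- Let k ≥ 2 and d−k ∈ {1, 2, 3}. There is a constant c > 0 depending only on d such that if the characteristic of F_q exceeds c, then for every point x ∈ H̄_k with x ≠ 0 the (d−k)×d Jacobian matrix (∂h_j/∂x_i)(x) has rank exactly d−k. -/
open MvPolynomial

lemma eval_pderiv_Xpow (K : Type) [CommRing K] (d : ℕ) (i i' : Fin d) (e : ℕ) (x : Fin d → K) :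
    eval x (pderiv i (X i' ^ e : MvPolynomial (Fin d) K)) = if i' = i then e * x i ^ (e-1) else 0 := by
  simp [pderiv_pow, Pi.single_apply]
  split <;> simp_all

lemma jac_entry (K : Type) [CommRing K] (d k : ℕ) (x : Fin d → K) (j : Fin (d-k)) (i : Fin d) :
    jacH K d k x j i = (if (i:ℕ) < k then (((j:ℕ)+2 : ℕ) : K) * x i ^ ((j:ℕ)+1) else 0)
      - (if (i:ℕ) = k + (j:ℕ) then (((j:ℕ)+2 : ℕ) : K) * x i ^ ((j:ℕ)+1) else 0) := by
  have hlt : k + (j:ℕ) < d := by have := j.isLt; omega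
  simp only [jacH, Matrix.of_apply, hpoly, map_sub, map_sum, eval_pderiv_Xpow,
    apply_ite (pderiv i), map_zero, apply_ite (eval x), eval_zero]
  have h1 : ∀ i' : Fin d, (if (i':ℕ) < k then if i' = i then (((j:ℕ)+2 : ℕ):K)*x i^((j:ℕ)+2-1) else 0 else 0)
      = if i' = i then (if (i:ℕ) < k then (((j:ℕ)+2:ℕ):K)*x i^((j:ℕ)+1) else 0) else 0 := by
    intro i'; by_cases h : i' = i <;> simp [h]
  rw [Finset.sum_congr rfl fun i' _ => h1 i', Finset.sum_ite_eq' Finset.univ i]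
  simp [Fin.ext_iff, eq_comm]

lemma variety_eq (K : Type) [CommRing K] (d k : ℕ) (x : Fin d → K) (hx : x ∈ Hset K d k)
    (j : ℕ) (hj : j < d - k) :
    ∑ i ∈ Finset.univ.filter (fun i : Fin d => (i:ℕ) < k), x i ^ (j+2)
      = x ⟨k + j, by omega⟩ ^ (j+2) := by
  have h := hx ⟨j, hj⟩
  simp only [hpoly, map_sub, map_sum, eval_pow, eval_X, apply_ite (eval x), eval_zero] at h
  rw [Finset.sum_filter]
  have : (⟨j, hj⟩ : Fin (d-k)) = ⟨j, hj⟩ := rfl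
  rw [sub_eq_zero] at h
  simpa using h

lemma count_zero_aux {K : Type*} [Field K] {ι : Type*} [DecidableEq ι] (T : Finset ι) (x : ι → K)
    [DecidablePred fun i => x i ≠ 0]
    (hcard : ∀ m : ℕ, m ≤ T.card → (m : K) = 0 → m = 0)
    (hm : (((T.filter fun i => x i ≠ 0)).card : K) = 0) : ∀ i ∈ T, x i = 0 := by
  have h0 : (T.filter fun i => x i ≠ 0).card = 0 :=
    hcard _ (Finset.card_filter_le _ _) hm
  intro i hi
  by_contra hxi
  have : i ∈ T.filter fun i => x i ≠ 0 := Finset.mem_filter.2 ⟨hi, hxi⟩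
  simp [Finset.card_eq_zero.1 h0] at this

lemma card_cast_eq_zero {K : Type*} [Field K] {ι : Type*} (A : Finset ι) (x : ι → K) (ρ : K)
    (hρ : ρ ≠ 0) (s : ℕ) (hval : ∀ i ∈ A, x i ^ s = ρ)
    (hsum : ∑ i ∈ A, x i ^ s = 0) : ((A.card : K) = 0) := by
  rw [Finset.sum_congr rfl hval, Finset.sum_const, nsmul_eq_mul] at hsum
  exact (mul_eq_zero.1 hsum).resolve_right hρ

open Finset in
/-- The core combinatorial lemma. -/
lemma core_lemma {K : Type*} [Field K] {ι : Type*} [DecidableEq ι] (n : ℕ)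
    (hn : n = 1 ∨ n = 2 ∨ n = 3) (c : ℕ → K) (T : Finset ι) (x : ι → K)
    (hcard : ∀ m : ℕ, m ≤ T.card → (m : K) = 0 → m = 0)
    (hB : ∀ i ∈ T, ∑ j ∈ Finset.range n, c j * x i ^ (j + 1) = 0)
    (hC : ∀ j < n, c j ≠ 0 → ∑ i ∈ T, x i ^ (j + 2) = 0)
    (hex : ∃ j < n, c j ≠ 0) :
    ∀ i ∈ T, x i = 0 := by
  classical
  set A := T.filter fun i => x i ≠ 0 with hA
  have hAT : ∀ s : ℕ, 0 < s → ∑ i ∈ T, x i ^ s = ∑ i ∈ A, x i ^ s := by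
    intro s hs
    rw [hA, Finset.sum_filter_of_ne]
    intro i _ h hxi
    exact h (by simp [hxi, zero_pow hs.ne'])
  have hmem : ∀ i ∈ A, x i ≠ 0 ∧ i ∈ T := fun i hi =>
    ⟨(Finset.mem_filter.1 hi).2, (Finset.mem_filter.1 hi).1⟩
  have hconc : ((A.card : K) = 0) → ∀ i ∈ T, x i = 0 := fun h => count_zero_aux T x hcard h
  rcases hn with rfl | rfl | rfl
  · -- n = 1
    obtain ⟨j, hj, hcj⟩ := hex
    interval_cases j
    intro i hi
    have := hB i hi
    simp [Finset.sum_range_one] at this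
    rcases this with h | h
    · exact absurd h hcj
    · simpa using h
  · -- n = 2
    have hB' : ∀ i ∈ T, c 0 * x i + c 1 * x i ^ 2 = 0 := by
      intro i hi
      have := hB i hi
      simpa [Finset.sum_range_succ, pow_one] using this
    by_cases h1 : c 1 = 0
    · have h0 : c 0 ≠ 0 := by
        obtain ⟨j, hj, hcj⟩ := hex; interval_cases j <;> simp_all
      intro i hi
      have := hB' i hi
      rw [h1] at this
      simpa [h0] using this
    · by_cases h0 : c 0 = 0
      · intro i hi
        have := hB' i hi
        rw [h0] at this
        simp [h1, pow_eq_zero_iff] at this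
        simpa using this
      · -- both nonzero
        apply hconc
        have hρ : (-(c 0) / c 1) ^ 2 ≠ 0 := by
          apply pow_ne_zero; exact div_ne_zero (neg_ne_zero.2 h0) h1
        apply card_cast_eq_zero A x _ hρ 2 _ ((hAT 2 two_pos) ▸ hC 0 (by omega) h0)
        intro i hi
        obtain ⟨hxi, hiT⟩ := hmem i hi
        have heq := hB' i hiT
        have h2 : x i * (c 0 + c 1 * x i) = 0 := by linear_combination heq
        have h3 : c 0 + c 1 * x i = 0 := (mul_eq_zero.1 h2).resolve_left hxi
        have h4 : x i = -(c 0) / c 1 := by rw [eq_div_iff h1]; linear_combination h3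
        rw [h4]
  · -- n = 3
    have hB' : ∀ i ∈ T, c 0 * x i + c 1 * x i ^ 2 + c 2 * x i ^ 3 = 0 := by
      intro i hi
      have := hB i hi
      simpa [Finset.sum_range_succ, pow_one] using this
    by_cases h2 : c 2 = 0
    · -- reduces to the n=2 situation
      by_cases h1 : c 1 = 0
      · have h0 : c 0 ≠ 0 := by
          obtain ⟨j, hj, hcj⟩ := hex; interval_cases j <;> [exact hcj; exact absurd h1 hcj; exact absurd h2 hcj]
        intro i hi
        have := hB' i hi
        rw [h1, h2] at this
        simpa [h0] using this
      · by_cases h0 : c 0 = 0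
        · intro i hi
          have := hB' i hi
          rw [h0, h2] at this
          simp [h1, pow_eq_zero_iff] at this
          simpa using this
        · apply hconc
          have hρ : (-(c 0) / c 1) ^ 2 ≠ 0 := by
            apply pow_ne_zero; exact div_ne_zero (neg_ne_zero.2 h0) h1
          apply card_cast_eq_zero A x _ hρ 2 _ ((hAT 2 two_pos) ▸ hC 0 (by omega) h0)
          intro i hi
          obtain ⟨hxi, hiT⟩ := hmem i hi
          have heq := hB' i hiT
          rw [h2] at heq
          have h2' : x i * (c 0 + c 1 * x i) = 0 := by linear_combination heq
          have h3 : c 0 + c 1 * x i = 0 := (mul_eq_zero.1 h2').resolve_left hxi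
          have h4 : x i = -(c 0) / c 1 := by rw [eq_div_iff h1]; linear_combination h3
          rw [h4]
    · by_cases h1 : c 1 = 0
      · by_cases h0 : c 0 = 0
        · intro i hi
          have := hB' i hi
          rw [h0, h1] at this
          simp [h2, pow_eq_zero_iff] at this
          simpa using this
        · -- c 0, c 2 ≠ 0, c 1 = 0 : x i ^ 2 = -c0/c2 on A
          apply hconc
          have hρ : -(c 0) / c 2 ≠ 0 := div_ne_zero (neg_ne_zero.2 h0) h2
          apply card_cast_eq_zero A x _ hρ 2 _ ((hAT 2 two_pos) ▸ hC 0 (by omega) h0)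
          intro i hi
          obtain ⟨hxi, hiT⟩ := hmem i hi
          have heq := hB' i hiT
          rw [h1] at heq
          have h2' : x i * (c 0 + c 2 * x i ^ 2) = 0 := by linear_combination heq
          have h3 : c 0 + c 2 * x i ^ 2 = 0 := (mul_eq_zero.1 h2').resolve_left hxi
          rw [eq_div_iff h2]
          linear_combination h3
      · by_cases h0 : c 0 = 0
        · -- c 1, c 2 ≠ 0, c 0 = 0 : x i = -c1/c2 on A, use exponent 3
          apply hconc
          have hρ : (-(c 1) / c 2) ^ 3 ≠ 0 := by
            apply pow_ne_zero; exact div_ne_zero (neg_ne_zero.2 h1) h2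
          apply card_cast_eq_zero A x _ hρ 3 _ ((hAT 3 three_pos) ▸ hC 1 (by omega) h1)
          intro i hi
          obtain ⟨hxi, hiT⟩ := hmem i hi
          have heq := hB' i hiT
          rw [h0] at heq
          have h2' : x i ^ 2 * (c 1 + c 2 * x i) = 0 := by linear_combination heq
          have h3 : c 1 + c 2 * x i = 0 :=
            (mul_eq_zero.1 h2').resolve_left (pow_ne_zero 2 hxi)
          have h4 : x i = -(c 1) / c 2 := by rw [eq_div_iff h2]; linear_combination h3
          rw [h4]
        · -- all three nonzero
          apply hconc
          have hkey : ∀ i ∈ A, c 0 + c 1 * x i + c 2 * x i ^ 2 = 0 := by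
            intro i hi
            obtain ⟨hxi, hiT⟩ := hmem i hi
            have heq := hB' i hiT
            have h2' : x i * (c 0 + c 1 * x i + c 2 * x i ^ 2) = 0 := by linear_combination heq
            exact (mul_eq_zero.1 h2').resolve_left hxi
          have hP2 : ∑ i ∈ A, x i ^ 2 = 0 := (hAT 2 two_pos) ▸ hC 0 (by omega) h0
          have hP3 : ∑ i ∈ A, x i ^ 3 = 0 := (hAT 3 three_pos) ▸ hC 1 (by omega) h1
          -- T1 = 0
          have hT1 : c 0 * ∑ i ∈ A, x i = 0 := by
            have : ∑ i ∈ A, (c 0 * x i + c 1 * x i ^ 2 + c 2 * x i ^ 3) = 0 := by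
              apply Finset.sum_eq_zero
              intro i hi
              linear_combination x i * hkey i hi
            rw [Finset.sum_add_distrib, Finset.sum_add_distrib, ← Finset.mul_sum,
              ← Finset.mul_sum, ← Finset.mul_sum, hP2, hP3] at this
            simpa using this
          have hT1' : ∑ i ∈ A, x i = 0 := by
            rcases mul_eq_zero.1 hT1 with h | h
            · exact absurd h h0
            · exact h
          have hm : c 0 * (A.card : K) = 0 := by
            have : ∑ i ∈ A, (c 0 + c 1 * x i + c 2 * x i ^ 2) = 0 :=
              Finset.sum_eq_zero hkey
            rw [Finset.sum_add_distrib, Finset.sum_add_distrib, ← Finset.mul_sum,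
              ← Finset.mul_sum, hP2, hT1', Finset.sum_const, nsmul_eq_mul] at this
            simpa [mul_comm] using this
          exact (mul_eq_zero.1 hm).resolve_left h0

lemma key_lemma (K : Type) [Field K] (d k : ℕ) (hk : 2 ≤ k)
    (hdk : d - k = 1 ∨ d - k = 2 ∨ d - k = 3)
    (hchar : ∀ m : ℕ, m ≤ d + 5 → (m : K) = 0 → m = 0)
    (x : Fin d → K) (hx : x ∈ Hset K d k) (hx0 : x ≠ 0) :
    (jacH K d k x).rank = d - k := by
  classical
  have hkd : k < d := by omega
  suffices h : LinearIndependent K (jacH K d k x).row by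
    rw [h.rank_matrix, Fintype.card_fin]
  rw [Fintype.linearIndependent_iff]
  intro g hg
  by_contra hcon
  push_neg at hcon
  obtain ⟨j₀, hj₀⟩ := hcon
  apply hx0
  -- pointwise version of the dependence
  have hg' : ∀ i : Fin d, ∑ j : Fin (d-k), g j * jacH K d k x j i = 0 := by
    intro i
    have := congrFun hg i
    simpa [Finset.sum_apply] using this
  set T : Finset (Fin d) := Finset.univ.filter (fun i : Fin d => (i:ℕ) < k) with hTdef
  set cE : ℕ → K := fun j => if h : j < d - k then g ⟨j, h⟩ * ((j + 2 : ℕ) : K) else 0 with hcE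
  -- the nat casts (j+2 : K) are nonzero
  have hw : ∀ j : ℕ, j < d - k → ((j + 2 : ℕ) : K) ≠ 0 := by
    intro j hj h
    have := hchar (j + 2) (by omega) h
    omega
  -- Statement A : from the columns k + j
  have hA : ∀ j : Fin (d - k),
      g j * (((j:ℕ) + 2 : ℕ) : K) * x ⟨k + (j:ℕ), by omega⟩ ^ ((j:ℕ)+1) = 0 := by
    intro j
    have hlt : k + (j:ℕ) < d := by have := j.isLt; omega
    have hi := hg' ⟨k + (j:ℕ), hlt⟩
    have hterm : ∀ j' : Fin (d - k), g j' * jacH K d k x j' ⟨k + (j:ℕ), hlt⟩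
        = if j' = j then -(g j * (((j:ℕ)+2 : ℕ) : K) * x ⟨k + (j:ℕ), hlt⟩ ^ ((j:ℕ)+1)) else 0 := by
      intro j'
      rw [jac_entry]
      simp only [Fin.val_mk]
      by_cases h : j' = j
      · subst h
        rw [if_neg (by omega : ¬ (k + (j':ℕ) < k)), if_pos rfl, if_pos rfl]
        ring
      · have h' : (j:ℕ) ≠ (j':ℕ) := fun hh => h (Fin.ext hh.symm)
        rw [if_neg (by omega : ¬ (k + (j:ℕ) < k)),
          if_neg (by omega : ¬ (k + (j:ℕ) = k + (j':ℕ))), if_neg h]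
        ring
    rw [Finset.sum_congr rfl (fun j' _ => hterm j'), Finset.sum_ite_eq' Finset.univ j] at hi
    simp only [Finset.mem_univ, if_true, neg_eq_zero] at hi
    exact hi
  -- Statement B : from the columns i < k
  have hB : ∀ i ∈ T, ∑ j ∈ Finset.range (d - k), cE j * x i ^ (j + 1) = 0 := by
    intro i hiT
    have hik : (i:ℕ) < k := by simpa [hTdef] using hiT
    have hi := hg' i
    have hterm : ∀ j : Fin (d - k), g j * jacH K d k x j i
        = g j * ((((j:ℕ)+2 : ℕ) : K) * x i ^ ((j:ℕ)+1)) := by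
      intro j
      rw [jac_entry, if_pos hik, if_neg (by omega : ¬ ((i:ℕ) = k + (j:ℕ)))]
      ring
    rw [Finset.sum_congr rfl (fun j _ => hterm j)] at hi
    rw [Finset.sum_range fun j => cE j * x i ^ (j+1)] at *
    rw [← hi]
    apply Finset.sum_congr rfl
    intro j _
    simp only [hcE, dif_pos j.isLt]
    ring
  -- Statement C : power sums vanish
  have hC : ∀ j, j < d - k → cE j ≠ 0 → ∑ i ∈ T, x i ^ (j + 2) = 0 := by
    intro j hj hcj
    have hgj : g ⟨j, hj⟩ * ((j + 2 : ℕ) : K) ≠ 0 := by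
      simpa [hcE, dif_pos hj] using hcj
    have hAj := hA ⟨j, hj⟩
    have hnu : x ⟨k + j, by omega⟩ = 0 := by
      have := mul_eq_zero.1 hAj
      rcases this with h | h
      · exact absurd h hgj
      · exact pow_eq_zero_iff (by omega) |>.1 h
    rw [variety_eq K d k x hx j hj, hnu, zero_pow (by omega)]
  -- apply the core lemma
  have hcard : ∀ m : ℕ, m ≤ T.card → (m : K) = 0 → m = 0 := by
    intro m hm h
    exact hchar m (le_trans hm (le_trans (Finset.card_filter_le _ _) (by simp))) h
  have hex : ∃ j, j < d - k ∧ cE j ≠ 0 := by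
    refine ⟨(j₀ : ℕ), j₀.isLt, ?_⟩
    simp only [hcE, dif_pos j₀.isLt]
    exact mul_ne_zero (by simpa using hj₀) (hw _ j₀.isLt)
  have hT : ∀ i ∈ T, x i = 0 := core_lemma (d - k) hdk cE T x hcard hB hC hex
  funext i
  by_cases hik : (i:ℕ) < k
  · exact hT i (by simp [hTdef, hik])
  · have hj : (i:ℕ) - k < d - k := by have := i.isLt; omega
    have hveq := variety_eq K d k x hx ((i:ℕ) - k) hj
    have hzero : ∑ i' ∈ T, x i' ^ ((i:ℕ) - k + 2) = 0 :=
      Finset.sum_eq_zero fun i' hi' => by rw [hT i' hi', zero_pow (by omega)]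
    rw [hzero] at hveq
    have : x ⟨k + ((i:ℕ) - k), by omega⟩ = 0 :=
      pow_eq_zero_iff (by omega) |>.1 hveq.symm
    have hii : (⟨k + ((i:ℕ) - k), by omega⟩ : Fin d) = i := by
      apply Fin.ext; simp; omega
    rwa [hii] at this

/-- For `k ≥ 2` and `d−k ∈ {1,2,3}`, if the characteristic is large
enough (depending only on `d`), then at every nonzero point of `H̄_k` the Jacobian
matrix has rank exactly `d−k`. -/
theorem Hbar_smooth_small_codim (d k : ℕ) (hk : 2 ≤ k)
    (hdk : d - k = 1 ∨ d - k = 2 ∨ d - k = 3) :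
    ∃ c : ℕ, 0 < c ∧ ∀ (F : Type) [Field F] [Fintype F], c < ringChar F →
      ∀ x ∈ Hset (AlgebraicClosure F) d k, x ≠ 0 →
        (jacH (AlgebraicClosure F) d k x).rank = d - k := by
  refine ⟨d + 5, by omega, ?_⟩
  intro F _ _ hc x hx hx0
  apply key_lemma _ d k hk hdk _ x hx hx0
  intro m hm h
  have h1 : (m : F) = 0 := by
    apply (algebraMap F (AlgebraicClosure F)).injective
    rw [map_natCast, map_zero, h]
  have h2 : ringChar F ∣ m := (CharP.cast_eq_zero_iff F (ringChar F) m).1 h1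
  exact Nat.eq_zero_of_dvd_of_lt h2 (by omega)
end
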